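/- There exists a monotone, non-negative, ℤ-invariant, subadditive function f on the nonempty finite subsets of ℤ such that lim_{n→∞} f({1,…,n})/n > inf over nonempty finite E ⊆ ℤ of f(E)/|E|. Concretely, with S = {1,2,4}, the function f(E) = min{ |E| − |F| : F ⊆ ℤ finite (possibly empty) and {p + S : p ∈ F} is a disjoint family of subsets of E } has this property; in particular f({1,…,4n}) = 3n for every n ≥ 1, while inf_E f(E)/|E| = 2/3. -/

import Mathlib

namespace Stmt4Proof

def tr (p : ℤ) : Finset ℤ := ({1, 2, 4} : Finset ℤ).image (fun s => p + s)

lemma mem_tr {a p : ℤ} : a ∈ tr p ↔ a = p + 1 ∨ a = p + 2 ∨ a = p + 4 := by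
  simp only [tr, Finset.mem_image, Finset.mem_insert, Finset.mem_singleton]
  constructor
  · rintro ⟨s, hs, rfl⟩; omega
  · rintro (rfl | rfl | rfl)
    · exact ⟨1, by simp⟩
    · exact ⟨2, by simp⟩
    · exact ⟨4, by simp⟩

lemma card_tr (p : ℤ) : (tr p).card = 3 := by
  rw [tr, Finset.card_image_of_injective _ (add_right_injective p)]
  decide

lemma tr_nonempty (p : ℤ) : (tr p).Nonempty := ⟨p + 1, mem_tr.mpr (Or.inl rfl)⟩

lemma disjoint_tr_of_gap {p q : ℤ} (h : p + 4 ≤ q ∨ q + 4 ≤ p) :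
    Disjoint (tr p) (tr q) := by
  rw [Finset.disjoint_left]
  intro a hp hq
  rw [mem_tr] at hp hq
  omega

lemma gap_of_disjoint_tr {p q : ℤ} (hne : p ≠ q) (h : Disjoint (tr p) (tr q)) :
    p + 4 ≤ q ∨ q + 4 ≤ p := by
  by_contra hc
  rw [Finset.disjoint_left] at h
  have h1 : ¬(p + 1 = q + 1 ∨ p + 1 = q + 2 ∨ p + 1 = q + 4) :=
    fun ha => h (mem_tr.mpr (Or.inl rfl)) (mem_tr.mpr ha)
  have h2 : ¬(p + 2 = q + 1 ∨ p + 2 = q + 2 ∨ p + 2 = q + 4) :=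
    fun ha => h (mem_tr.mpr (Or.inr (Or.inl rfl))) (mem_tr.mpr ha)
  have h4 : ¬(p + 4 = q + 1 ∨ p + 4 = q + 2 ∨ p + 4 = q + 4) :=
    fun ha => h (mem_tr.mpr (Or.inr (Or.inr rfl))) (mem_tr.mpr ha)
  omega

def Valid (E F : Finset ℤ) : Prop :=
  (∀ p ∈ F, tr p ⊆ E) ∧ ∀ p ∈ F, ∀ q ∈ F, p ≠ q → Disjoint (tr p) (tr q)

open Classical in
noncomputable def m (E : Finset ℤ) : ℕ :=
  ((E.image (fun x => x - 1)).powerset.filter (fun F => Valid E F)).sup Finset.card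

lemma le_m {E F : Finset ℤ} (h : Valid E F) : F.card ≤ m E := by
  classical
  apply Finset.le_sup
  simp only [Finset.mem_filter, Finset.mem_powerset]
  refine ⟨fun p hp => ?_, h⟩
  exact Finset.mem_image.mpr ⟨p + 1, h.1 p hp (mem_tr.mpr (Or.inl rfl)), by ring⟩

lemma exists_m (E : Finset ℤ) : ∃ F, Valid E F ∧ F.card = m E := by
  classical
  have hne : (((E.image (fun x => x - 1)).powerset.filter (fun F => Valid E F))).Nonempty := by
    refine ⟨∅, ?_⟩
    simp only [Finset.mem_filter, Finset.mem_powerset]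
    exact ⟨Finset.empty_subset _, fun p hp => absurd hp (Finset.notMem_empty p),
      fun p hp => absurd hp (Finset.notMem_empty p)⟩
  obtain ⟨F, hF, hsup⟩ := Finset.exists_mem_eq_sup _ hne Finset.card
  simp only [Finset.mem_filter, Finset.mem_powerset] at hF
  exact ⟨F, hF.2, hsup.symm⟩

lemma three_mul_le {E F : Finset ℤ} (h : Valid E F) : 3 * F.card ≤ E.card := by
  classical
  have hsub : F.biUnion tr ⊆ E := by
    intro a ha
    obtain ⟨p, hp, hap⟩ := Finset.mem_biUnion.mp ha
    exact h.1 p hp hap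
  have hcard : (F.biUnion tr).card = 3 * F.card := by
    rw [Finset.card_biUnion h.2]
    rw [Finset.sum_congr rfl (fun p _ => card_tr p), Finset.sum_const, smul_eq_mul, mul_comm]
  have := Finset.card_le_card hsub
  omega

lemma three_m_le_card (E : Finset ℤ) : 3 * m E ≤ E.card := by
  obtain ⟨F, hF, hc⟩ := exists_m E
  have := three_mul_le hF
  omega

lemma m_le_card (E : Finset ℤ) : m E ≤ E.card := by
  have := three_m_le_card E; omega


lemma m_mono_aux {E F : Finset ℤ} (h : E ⊆ F) : m F + E.card ≤ m E + F.card := by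
  classical
  obtain ⟨G, hG, hGc⟩ := exists_m F
  have hsplit : (G.filter (fun p => tr p ⊆ E)).card
      + (G.filter (fun p => ¬ tr p ⊆ E)).card = G.card :=
    Finset.card_filter_add_card_filter_not _
  have h1 : (G.filter (fun p => tr p ⊆ E)).card ≤ m E := by
    apply le_m
    refine ⟨fun p hp => (Finset.mem_filter.mp hp).2, fun p hp q hq hpq => ?_⟩
    exact hG.2 p (Finset.filter_subset _ _ hp) q (Finset.filter_subset _ _ hq) hpq
  have h2 : (G.filter (fun p => ¬ tr p ⊆ E)).card ≤ (F \ E).card := by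
    have hne : ∀ p ∈ G.filter (fun p => ¬ tr p ⊆ E), ((tr p) \ E).Nonempty := by
      intro p hp
      have h' := (Finset.mem_filter.mp hp).2
      rw [Finset.not_subset] at h'
      obtain ⟨a, ha, hae⟩ := h'
      exact ⟨a, Finset.mem_sdiff.mpr ⟨ha, hae⟩⟩
    apply Finset.card_le_card_of_injOn
      (fun p => if hp : ((tr p) \ E).Nonempty then ((tr p) \ E).min' hp else 0)
    · intro p hp
      dsimp only
      rw [dif_pos (hne p hp)]
      have hmem := Finset.mem_sdiff.mp (Finset.min'_mem _ (hne p hp))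
      exact Finset.mem_sdiff.mpr ⟨hG.1 p (Finset.filter_subset _ _ hp) hmem.1, hmem.2⟩
    · intro p hp q hq hpq
      by_contra hne'
      have hp' : p ∈ G.filter (fun p => ¬ tr p ⊆ E) := hp
      have hq' : q ∈ G.filter (fun p => ¬ tr p ⊆ E) := hq
      have hd := hG.2 p (Finset.filter_subset _ _ hp') q (Finset.filter_subset _ _ hq') hne'
      simp only [dif_pos (hne p hp'), dif_pos (hne q hq')] at hpq
      have hpm := Finset.mem_sdiff.mp (Finset.min'_mem _ (hne p hp'))
      have hqm := Finset.mem_sdiff.mp (Finset.min'_mem _ (hne q hq'))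
      exact Finset.disjoint_left.mp hd hpm.1 (hpq ▸ hqm.1)
  have h3 : (F \ E).card + E.card = F.card := Finset.card_sdiff_add_card_eq_card h
  omega

lemma m_subadd (E F : Finset ℤ) : m E + m F ≤ m (E ∪ F) + (E ∩ F).card := by
  classical
  obtain ⟨G, hG, hGc⟩ := exists_m E
  obtain ⟨H, hH, hHc⟩ := exists_m F
  set H' := H.filter (fun q => ∀ p ∈ G, Disjoint (tr p) (tr q)) with hH'def
  have hK : Valid (E ∪ F) (G ∪ H') := by
    constructor
    · intro p hp
      rcases Finset.mem_union.mp hp with h | h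
      · exact (hG.1 p h).trans Finset.subset_union_left
      · exact (hH.1 p (Finset.filter_subset _ _ h)).trans Finset.subset_union_right
    · intro p hp q hq hpq
      rcases Finset.mem_union.mp hp with h1 | h1 <;> rcases Finset.mem_union.mp hq with h2 | h2
      · exact hG.2 p h1 q h2 hpq
      · exact (Finset.mem_filter.mp h2).2 p h1
      · exact ((Finset.mem_filter.mp h1).2 q h2).symm
      · exact hH.2 p (Finset.filter_subset _ _ h1) q (Finset.filter_subset _ _ h2) hpq
  have hmK := le_m hK
  have hcard1 : (G ∪ H').card = (H' \ G).card + G.card := by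
    rw [Finset.union_comm]
    exact (Finset.card_sdiff_add_card H' G).symm
  have hkey : (H \ (H' \ G)).card ≤ (E ∩ F).card := by
    have hne : ∀ q ∈ H \ (H' \ G), ((tr q) ∩ (E ∩ F)).Nonempty := by
      intro q hq
      rw [Finset.mem_sdiff] at hq
      obtain ⟨hqH, hq2⟩ := hq
      by_cases hqG : q ∈ G
      · obtain ⟨a, ha⟩ := tr_nonempty q
        exact ⟨a, Finset.mem_inter.mpr ⟨ha,
          Finset.mem_inter.mpr ⟨hG.1 q hqG ha, hH.1 q hqH ha⟩⟩⟩
      · have hqH' : q ∉ H' := fun h => hq2 (Finset.mem_sdiff.mpr ⟨h, hqG⟩)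
        rw [hH'def, Finset.mem_filter, not_and] at hqH'
        have h' := hqH' hqH
        push_neg at h'
        obtain ⟨p, hpG, hnd⟩ := h'
        rw [Finset.not_disjoint_iff] at hnd
        obtain ⟨a, hap, haq⟩ := hnd
        exact ⟨a, Finset.mem_inter.mpr ⟨haq,
          Finset.mem_inter.mpr ⟨hG.1 p hpG hap, hH.1 q hqH haq⟩⟩⟩
    apply Finset.card_le_card_of_injOn
      (fun q => if hq : ((tr q) ∩ (E ∩ F)).Nonempty then ((tr q) ∩ (E ∩ F)).min' hq else 0)
    · intro q hq
      dsimp only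
      rw [dif_pos (hne q hq)]
      exact (Finset.mem_inter.mp (Finset.min'_mem _ (hne q hq))).2
    · intro p hp q hq hpq
      by_contra hne'
      have hp' : p ∈ H \ (H' \ G) := hp
      have hq' : q ∈ H \ (H' \ G) := hq
      have hd := hH.2 p (Finset.mem_sdiff.mp hp').1 q (Finset.mem_sdiff.mp hq').1 hne'
      simp only [dif_pos (hne p hp'), dif_pos (hne q hq')] at hpq
      have hpm := (Finset.mem_inter.mp (Finset.min'_mem _ (hne p hp'))).1
      have hqm := (Finset.mem_inter.mp (Finset.min'_mem _ (hne q hq'))).1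
      exact Finset.disjoint_left.mp hd hpm (hpq ▸ hqm)
  have hsub : H' \ G ⊆ H := (Finset.sdiff_subset).trans (Finset.filter_subset _ _)
  have h4 : (H \ (H' \ G)).card + (H' \ G).card = H.card :=
    Finset.card_sdiff_add_card_eq_card hsub
  omega

lemma tr_add (p g : ℤ) : tr (p + g) = (tr p).image (fun x => x + g) := by
  ext a
  simp only [mem_tr, Finset.mem_image]
  constructor
  · rintro (rfl | rfl | rfl)
    · exact ⟨p + 1, Or.inl rfl, by ring⟩
    · exact ⟨p + 2, Or.inr (Or.inl rfl), by ring⟩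
    · exact ⟨p + 4, Or.inr (Or.inr rfl), by ring⟩
  · rintro ⟨x, hx, rfl⟩; omega

lemma m_le_m_image (E : Finset ℤ) (g : ℤ) : m E ≤ m (E.image (fun x => x + g)) := by
  classical
  obtain ⟨G, hG, hGc⟩ := exists_m E
  have hval : Valid (E.image (fun x => x + g)) (G.image (fun x => x + g)) := by
    constructor
    · intro p hp
      obtain ⟨p0, hp0, rfl⟩ := Finset.mem_image.mp hp
      rw [tr_add]
      exact Finset.image_subset_image (hG.1 p0 hp0)
    · intro p hp q hq hpq
      obtain ⟨p0, hp0, rfl⟩ := Finset.mem_image.mp hp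
      obtain ⟨q0, hq0, rfl⟩ := Finset.mem_image.mp hq
      rw [tr_add, tr_add]
      rw [Finset.disjoint_image (add_left_injective g)]
      exact hG.2 p0 hp0 q0 hq0 (by omega)
  have h' := le_m hval
  rw [Finset.card_image_of_injective _ (add_left_injective g)] at h'
  omega

lemma m_image (E : Finset ℤ) (g : ℤ) : m (E.image (fun x => x + g)) = m E := by
  apply le_antisymm _ (m_le_m_image E g)
  have h2 := m_le_m_image (E.image (fun x => x + g)) (-g)
  rw [Finset.image_image] at h2
  have he : E.image ((fun x => x + -g) ∘ fun x => x + g) = E := by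
    simp [Function.comp]
  rwa [he] at h2


lemma m_Icc (n : ℕ) : m (Finset.Icc (1 : ℤ) (n : ℤ)) = n / 4 := by
  classical
  apply le_antisymm
  · obtain ⟨G, hG, hGc⟩ := exists_m (Finset.Icc (1 : ℤ) (n : ℤ))
    rw [← hGc]
    have hb : ∀ p ∈ G, 0 ≤ p ∧ p + 4 ≤ (n : ℤ) := by
      intro p hp
      have h1 := hG.1 p hp (mem_tr.mpr (Or.inl rfl))
      have h4 := hG.1 p hp (mem_tr.mpr (Or.inr (Or.inr rfl)))
      rw [Finset.mem_Icc] at h1 h4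
      omega
    have hcard : G.card ≤ (Finset.range (n / 4)).card := by
      apply Finset.card_le_card_of_injOn (fun p => (p / 4).toNat)
      · intro p hp
        obtain ⟨h0, h4⟩ := hb p hp
        dsimp only
        rw [Finset.mem_coe, Finset.mem_range]
        omega
      · intro p hp q hq hpq
        by_contra hne'
        have hgap := gap_of_disjoint_tr hne' (hG.2 p hp q hq hne')
        obtain ⟨hp0, _⟩ := hb p hp
        obtain ⟨hq0, _⟩ := hb q hq
        simp only at hpq
        omega
    simpa using hcard
  · have hval : Valid (Finset.Icc (1 : ℤ) (n : ℤ))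
        ((Finset.range (n / 4)).image (fun k : ℕ => 4 * (k : ℤ))) := by
      constructor
      · intro p hp
        obtain ⟨k, hk, rfl⟩ := Finset.mem_image.mp hp
        rw [Finset.mem_range] at hk
        intro a ha
        rw [mem_tr] at ha
        rw [Finset.mem_Icc]
        omega
      · intro p hp q hq hpq
        obtain ⟨k, hk, rfl⟩ := Finset.mem_image.mp hp
        obtain ⟨j, hj, rfl⟩ := Finset.mem_image.mp hq
        apply disjoint_tr_of_gap
        have : k ≠ j := by rintro rfl; exact hpq rfl
        omega
    have h' := le_m hval
    rwa [Finset.card_image_of_injective _ (fun a b hab => by omega),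
      Finset.card_range] at h'

lemma m_S : m ({1, 2, 4} : Finset ℤ) = 1 := by
  apply le_antisymm
  · obtain ⟨G, hG, hGc⟩ := exists_m ({1, 2, 4} : Finset ℤ)
    rw [← hGc]
    have hsub : G ⊆ {0} := by
      intro p hp
      have h1 := hG.1 p hp (mem_tr.mpr (Or.inl rfl))
      have h2 := hG.1 p hp (mem_tr.mpr (Or.inr (Or.inl rfl)))
      have h4 := hG.1 p hp (mem_tr.mpr (Or.inr (Or.inr rfl)))
      simp only [Finset.mem_insert, Finset.mem_singleton] at h1 h2 h4 ⊢
      omega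
    simpa using Finset.card_le_card hsub
  · have hval : Valid ({1, 2, 4} : Finset ℤ) {0} := by
      constructor
      · intro p hp
        simp only [Finset.mem_singleton] at hp
        subst hp
        intro a ha
        rw [mem_tr] at ha
        simp only [Finset.mem_insert, Finset.mem_singleton]
        omega
      · intro p hp q hq hpq
        simp only [Finset.mem_singleton] at hp hq
        exact absurd (hp.trans hq.symm) hpq
    simpa using le_m hval

noncomputable def f (E : Finset ℤ) : ℝ := (E.card : ℝ) - (m E : ℝ)

lemma f_nonneg (E : Finset ℤ) : 0 ≤ f E := by
  have := m_le_card E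
  simp only [f, sub_nonneg]
  exact_mod_cast this

lemma f_mono {E F : Finset ℤ} (h : E ⊆ F) : f E ≤ f F := by
  have := m_mono_aux h
  simp only [f]
  have hc : (m F : ℝ) + E.card ≤ (m E : ℝ) + F.card := by exact_mod_cast this
  linarith

lemma f_subadd (E F : Finset ℤ) : f (E ∪ F) ≤ f E + f F := by
  have h1 := m_subadd E F
  have h2 : (E ∪ F).card + (E ∩ F).card = E.card + F.card :=
    Finset.card_union_add_card_inter E F
  simp only [f]
  have h1' : (m E : ℝ) + m F ≤ (m (E ∪ F) : ℝ) + (E ∩ F).card := by exact_mod_cast h1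
  have h2' : ((E ∪ F).card : ℝ) + (E ∩ F).card = (E.card : ℝ) + F.card := by exact_mod_cast h2
  linarith

lemma f_inv (E : Finset ℤ) (g : ℤ) : f (E.image (fun x => x + g)) = f E := by
  simp only [f, m_image, Finset.card_image_of_injective _ (add_left_injective g)]

lemma f_ratio_ge (E : Finset ℤ) (hE : E.Nonempty) : 2 / 3 ≤ f E / E.card := by
  have h3 := three_m_le_card E
  have hc : (0 : ℝ) < E.card := by exact_mod_cast Finset.card_pos.mpr hE
  rw [le_div_iff₀ hc]
  have : (3 : ℝ) * m E ≤ E.card := by exact_mod_cast h3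
  simp only [f]
  linarith


lemma card_Icc_nat (n : ℕ) : (Finset.Icc (1 : ℤ) (n : ℤ)).card = n := by
  rw [Int.card_Icc]
  omega

lemma f_Icc (n : ℕ) : f (Finset.Icc (1 : ℤ) (n : ℤ)) = (n : ℝ) - ((n / 4 : ℕ) : ℝ) := by
  simp only [f, m_Icc, card_Icc_nat]

lemma inf_eq : (⨅ E : {E : Finset ℤ // E.Nonempty}, f E.1 / E.1.card) = 2 / 3 := by
  have hbdd : BddBelow (Set.range fun E : {E : Finset ℤ // E.Nonempty} => f E.1 / E.1.card) := by
    refine ⟨0, ?_⟩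
    rintro x ⟨E, rfl⟩
    exact div_nonneg (f_nonneg E.1) (by positivity)
  apply le_antisymm
  · have hS : ({1, 2, 4} : Finset ℤ).Nonempty := ⟨1, by decide⟩
    have h := ciInf_le hbdd ⟨({1, 2, 4} : Finset ℤ), hS⟩
    have hv : f ({1, 2, 4} : Finset ℤ) / (({1, 2, 4} : Finset ℤ).card : ℝ) = 2 / 3 := by
      have hc : ({1, 2, 4} : Finset ℤ).card = 3 := by decide
      simp only [f, m_S, hc]
      norm_num
    rwa [hv] at h
  · haveI : Nonempty {E : Finset ℤ // E.Nonempty} := ⟨⟨{0}, ⟨0, by simp⟩⟩⟩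
    exact le_ciInf fun E => f_ratio_ge E.1 E.2

end Stmt4Proof

/-- There is a monotone, non-negative, `ℤ`-invariant, subadditive
function `f` on finite subsets of `ℤ` whose Følner averages `f({1,…,n})/n` converge
to a limit strictly greater than `inf f(E)/|E|`; concretely one can arrange
`f({1,…,4n}) = 3n` and `inf f(E)/|E| = 2/3`. -/
theorem stmt4 :
    ∃ f : Finset ℤ → ℝ,
      (∀ E F : Finset ℤ, E ⊆ F → f E ≤ f F) ∧
      (∀ E : Finset ℤ, 0 ≤ f E) ∧
      (∀ (E : Finset ℤ) (g : ℤ), f (E.image (fun x => x + g)) = f E) ∧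
      (∀ E F : Finset ℤ, f (E ∪ F) ≤ f E + f F) ∧
      (∀ n : ℕ, 1 ≤ n → f (Finset.Icc (1 : ℤ) (4 * n)) = 3 * n) ∧
      (⨅ E : {E : Finset ℤ // E.Nonempty}, f E.1 / E.1.card) = 2 / 3 ∧
      ∃ L : ℝ,
        Filter.Tendsto (fun n : ℕ => f (Finset.Icc (1 : ℤ) n) / n) Filter.atTop (nhds L) ∧
        (⨅ E : {E : Finset ℤ // E.Nonempty}, f E.1 / E.1.card) < L := by
  refine ⟨Stmt4Proof.f, fun E F h => Stmt4Proof.f_mono h, Stmt4Proof.f_nonneg, Stmt4Proof.f_inv, Stmt4Proof.f_subadd, ?_, Stmt4Proof.inf_eq, ?_⟩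
  · intro n hn
    have h4 : (4 * (n : ℤ)) = ((4 * n : ℕ) : ℤ) := by push_cast; ring
    rw [h4, Stmt4Proof.f_Icc]
    have : (4 * n) / 4 = n := by omega
    rw [this]
    push_cast
    ring
  · refine ⟨3 / 4, ?_, ?_⟩
    · have hup : Filter.Tendsto (fun n : ℕ => 3 / 4 + 1 / (n : ℝ)) Filter.atTop
          (nhds (3 / 4)) := by
        have h0 : Filter.Tendsto (fun n : ℕ => 1 / (n : ℝ)) Filter.atTop (nhds 0) :=
          tendsto_one_div_atTop_nhds_zero_nat
        simpa using tendsto_const_nhds.add h0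
      apply tendsto_of_tendsto_of_tendsto_of_le_of_le' tendsto_const_nhds hup
      · filter_upwards [Filter.eventually_ge_atTop 1] with n hn
        rw [Stmt4Proof.f_Icc]
        have hn0 : (0 : ℝ) < n := by exact_mod_cast hn
        rw [le_div_iff₀ hn0]
        have h1 : ((n / 4 : ℕ) : ℝ) * 4 ≤ (n : ℝ) := by
          exact_mod_cast (by omega : (n / 4) * 4 ≤ n)
        linarith
      · filter_upwards [Filter.eventually_ge_atTop 1] with n hn
        rw [Stmt4Proof.f_Icc]
        have hn0 : (0 : ℝ) < n := by exact_mod_cast hn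
        rw [div_le_iff₀ hn0]
        have h1 : (n : ℝ) ≤ ((n / 4 : ℕ) : ℝ) * 4 + 3 := by
          exact_mod_cast (by omega : n ≤ (n / 4) * 4 + 3)
        have h3 : (3 / 4 + 1 / (n : ℝ)) * n = 3 / 4 * n + 1 := by
          field_simp
        rw [h3]
        linarith
    · rw [Stmt4Proof.inf_eq]
      norm_num
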